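/- arXiv:2404.19507 — 2 statements merged into one kernel-verified Lean document; each statement's English description precedes it below -/
import Mathlib

section
/- Let p₀ ∈ (0,1), let q ∈ [1/2, 1), and let λ₁, …, λₙ be positive reals with (1−q)/q ≤ λᵢ ≤ q/(1−q) for every i. Define T_λ(p) = p/(p + (1−p)·λ) and let pₙ = T_{λₙ}(⋯(T_{λ₁}(p₀))⋯) be the posterior after the n updates. Then (p₀·(1−q)ⁿ)/(p₀·(1−q)ⁿ + (1−p₀)·qⁿ) ≤ pₙ ≤ (p₀·qⁿ)/(p₀·qⁿ + (1−p₀)·(1−q)ⁿ). That is, if every signal of every consulted consultant has conditional probability of the correct state at most q, the posterior after n consultations lies between these two bounds. -/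
/-- Bayesian update with likelihood ratio `λ`. -/
noncomputable def bayesUpdate (l p : ℝ) : ℝ := p / (p + (1 - p) * l)

lemma bayesUpdate_mem (l p : ℝ) (hp : p ∈ Set.Ioo (0:ℝ) 1) (hl : 0 < l) :
    bayesUpdate l p ∈ Set.Ioo (0:ℝ) 1 := by
  obtain ⟨hp0, hp1⟩ := hp
  have h1p : 0 < 1 - p := by linarith
  have hd : 0 < p + (1 - p) * l := by positivity
  refine ⟨div_pos hp0 hd, ?_⟩
  unfold bayesUpdate
  rw [div_lt_one hd]
  nlinarith

lemma bayesUpdate_comp (l m p : ℝ) (hp : p ∈ Set.Ioo (0:ℝ) 1) (hl : 0 < l) (hm : 0 < m) :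
    bayesUpdate m (bayesUpdate l p) = bayesUpdate (l * m) p := by
  obtain ⟨hp0, hp1⟩ := hp
  have h1p : 0 < 1 - p := by linarith
  have hd : 0 < p + (1 - p) * l := by positivity
  have hd2 : 0 < p + (1 - p) * (l * m) := by positivity
  unfold bayesUpdate
  have hnum : p / (p + (1 - p) * l) + (1 - p / (p + (1 - p) * l)) * m
      = (p + (1 - p) * (l * m)) / (p + (1 - p) * l) := by
    field_simp
    ring
  rw [hnum, div_div_div_eq]
  rw [mul_comm p (p + (1 - p) * l)]
  exact mul_div_mul_left _ _ hd.ne'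

lemma foldl_eq_prod (L : List ℝ) (hL : ∀ l ∈ L, 0 < l) (p : ℝ) (hp : p ∈ Set.Ioo (0:ℝ) 1) :
    L.foldl (fun p l => bayesUpdate l p) p = bayesUpdate L.prod p := by
  induction L generalizing p with
  | nil =>
    have : p + (1 - p) * 1 = 1 := by ring
    simp [bayesUpdate, this]
  | cons l L ih =>
    have hl : 0 < l := hL l (by simp)
    have hLpos : ∀ x ∈ L, 0 < x := fun x hx => hL x (by simp [hx])
    have hprod : 0 < L.prod := List.prod_pos hLpos
    rw [List.foldl_cons, ih hLpos _ (bayesUpdate_mem l p hp hl),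
      bayesUpdate_comp l L.prod p hp hl hprod, List.prod_cons]

lemma bayesUpdate_anti (p a b : ℝ) (hp : p ∈ Set.Ioo (0:ℝ) 1) (ha : 0 < a) (hab : a ≤ b) :
    bayesUpdate b p ≤ bayesUpdate a p := by
  obtain ⟨hp0, hp1⟩ := hp
  have h1p : 0 < 1 - p := by linarith
  have hda : 0 < p + (1 - p) * a := by positivity
  unfold bayesUpdate
  apply div_le_div_of_nonneg_left hp0.le hda
  nlinarith

lemma prod_bounds (L : List ℝ) (a b : ℝ) (ha : 0 < a)
    (hL : ∀ l ∈ L, a ≤ l ∧ l ≤ b) :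
    a ^ L.length ≤ L.prod ∧ L.prod ≤ b ^ L.length := by
  induction L with
  | nil => simp
  | cons l L ih =>
    obtain ⟨h1, h2⟩ := hL l (by simp)
    obtain ⟨ih1, ih2⟩ := ih (fun x hx => hL x (by simp [hx]))
    have hpow : (0:ℝ) < a ^ L.length := pow_pos ha _
    have hprod : (0:ℝ) ≤ L.prod := le_trans hpow.le ih1
    rw [List.prod_cons, List.length_cons, pow_succ, pow_succ]
    constructor
    · rw [mul_comm (a ^ L.length) a]
      exact mul_le_mul h1 ih1 hpow.le (le_trans ha.le h1)
    · rw [mul_comm (b ^ L.length) b]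
      exact mul_le_mul h2 ih2 hprod (le_trans (le_trans ha.le h1) h2)

/-- Posterior bounds for non-revealing consultants (central estimate of Theorem 4.2):
if every consulted signal has likelihood ratio in `[(1-q)/q, q/(1-q)]`, then the
posterior after `n` consultations lies between
`p₀(1-q)ⁿ / (p₀(1-q)ⁿ + (1-p₀)qⁿ)` and `p₀qⁿ / (p₀qⁿ + (1-p₀)(1-q)ⁿ)`. -/
theorem posterior_bounds (p₀ q : ℝ) (hp : p₀ ∈ Set.Ioo (0:ℝ) 1)
    (hq : q ∈ Set.Ico (1/2 : ℝ) 1) (L : List ℝ)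
    (hL : ∀ l ∈ L, (1 - q) / q ≤ l ∧ l ≤ q / (1 - q)) :
    p₀ * (1 - q) ^ L.length / (p₀ * (1 - q) ^ L.length + (1 - p₀) * q ^ L.length)
        ≤ L.foldl (fun p l => bayesUpdate l p) p₀ ∧
    L.foldl (fun p l => bayesUpdate l p) p₀
        ≤ p₀ * q ^ L.length / (p₀ * q ^ L.length + (1 - p₀) * (1 - q) ^ L.length) := by
  obtain ⟨hp0, hp1⟩ := hp
  obtain ⟨hq1, hq2⟩ := hq
  have hqpos : 0 < q := by linarith
  have h1q : 0 < 1 - q := by linarith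
  have ha : 0 < (1 - q) / q := by positivity
  have hb : 0 < q / (1 - q) := by positivity
  have h1p : 0 < 1 - p₀ := by linarith
  set n := L.length with hn
  have hLpos : ∀ l ∈ L, 0 < l := fun l hl => lt_of_lt_of_le ha (hL l hl).1
  have hfold := foldl_eq_prod L hLpos p₀ ⟨hp0, hp1⟩
  obtain ⟨hpl, hpu⟩ := prod_bounds L ((1 - q) / q) (q / (1 - q)) ha hL
  have hprodpos : 0 < L.prod := List.prod_pos hLpos
  have hlow : bayesUpdate ((q / (1 - q)) ^ n) p₀ ≤ bayesUpdate L.prod p₀ :=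
    bayesUpdate_anti p₀ L.prod ((q / (1 - q)) ^ n) ⟨hp0, hp1⟩ hprodpos hpu
  have hhigh : bayesUpdate L.prod p₀ ≤ bayesUpdate (((1 - q) / q) ^ n) p₀ :=
    bayesUpdate_anti p₀ (((1 - q) / q) ^ n) L.prod ⟨hp0, hp1⟩ (pow_pos ha n) hpl
  have hqn : (0:ℝ) < q ^ n := pow_pos hqpos n
  have h1qn : (0:ℝ) < (1 - q) ^ n := pow_pos h1q n
  have hdl : 0 < p₀ * (1 - q) ^ n + (1 - p₀) * q ^ n := by positivity
  have hdu : 0 < p₀ * q ^ n + (1 - p₀) * (1 - q) ^ n := by positivity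
  have heq1 : bayesUpdate ((q / (1 - q)) ^ n) p₀
      = p₀ * (1 - q) ^ n / (p₀ * (1 - q) ^ n + (1 - p₀) * q ^ n) := by
    unfold bayesUpdate
    rw [div_pow, div_eq_div_iff (by positivity) hdl.ne']
    field_simp
  have heq2 : bayesUpdate (((1 - q) / q) ^ n) p₀
      = p₀ * q ^ n / (p₀ * q ^ n + (1 - p₀) * (1 - q) ^ n) := by
    unfold bayesUpdate
    rw [div_pow, div_eq_div_iff (by positivity) hdu.ne']
    field_simp
  rw [hfold]
  exact ⟨heq1 ▸ hlow, heq2 ▸ hhigh⟩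
end

section
/- Let p₀ ∈ (0,1), let u_R, u_L ∈ (0,1], let ε ∈ (0,1], and let q ∈ [1/2, 1). Then there exists C > 0 such that for every c ∈ (0, C] and every n ∈ ℕ, both of the following inequalities hold: (a) p₀·u_R·(p₀·qⁿ)/(p₀·qⁿ + (1−p₀)·(1−q)ⁿ) − c·n ≤ p₀·u_R + (1−p₀)·u_L − c/ε; and (b) (1−p₀)·u_L·(1 − (p₀·(1−q)ⁿ)/(p₀·(1−q)ⁿ + (1−p₀)·qⁿ)) − c·n ≤ p₀·u_R + (1−p₀)·u_L − c/ε. -/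
/-- The key comparison in the proof of Theorem 4.2: for sufficiently small
consultation cost `c`, the payoff of any strategy that consults only non-revealing
consultants `n` times before investing is at most the payoff
`p₀ u_R + (1-p₀) u_L - c/ε` of the strategy that consults the revealing consultant
until the state is revealed. -/
theorem small_cost_comparison (p₀ uR uL ε q : ℝ) (hp : p₀ ∈ Set.Ioo (0:ℝ) 1)
    (huR : uR ∈ Set.Ioc (0:ℝ) 1) (huL : uL ∈ Set.Ioc (0:ℝ) 1)
    (hε : ε ∈ Set.Ioc (0:ℝ) 1) (hq : q ∈ Set.Ico (1/2 : ℝ) 1) :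
    ∃ C > 0, ∀ c ∈ Set.Ioc (0:ℝ) C, ∀ n : ℕ,
      (p₀ * uR * (p₀ * q ^ n / (p₀ * q ^ n + (1 - p₀) * (1 - q) ^ n)) - c * n
          ≤ p₀ * uR + (1 - p₀) * uL - c / ε) ∧
      ((1 - p₀) * uL *
            (1 - p₀ * (1 - q) ^ n / (p₀ * (1 - q) ^ n + (1 - p₀) * q ^ n)) - c * n
          ≤ p₀ * uR + (1 - p₀) * uL - c / ε) := by
  obtain ⟨hp0, hp1⟩ := hp
  obtain ⟨huR0, _⟩ := huR
  obtain ⟨huL0, _⟩ := huL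
  obtain ⟨hε0, _⟩ := hε
  obtain ⟨hq0, hq1⟩ := hq
  have hq0' : (0:ℝ) < q := lt_of_lt_of_le (by norm_num) hq0
  have hq1' : (0:ℝ) < 1 - q := by linarith
  have hp1' : (0:ℝ) < 1 - p₀ := by linarith
  refine ⟨ε * min (p₀ * uR) ((1 - p₀) * uL), by positivity, ?_⟩
  rintro c ⟨hc0, hcC⟩ n
  have hcε : c / ε ≤ min (p₀ * uR) ((1 - p₀) * uL) := by
    rw [div_le_iff₀ hε0]
    calc c ≤ ε * min (p₀ * uR) ((1 - p₀) * uL) := hcC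
      _ = min (p₀ * uR) ((1 - p₀) * uL) * ε := mul_comm _ _
  have hcn : (0:ℝ) ≤ c * n := by positivity
  have hqn : (0:ℝ) < q ^ n := by positivity
  have hqn' : (0:ℝ) < (1 - q) ^ n := by positivity
  constructor
  · have hd : (0:ℝ) < p₀ * q ^ n + (1 - p₀) * (1 - q) ^ n := by positivity
    have hfrac : p₀ * q ^ n / (p₀ * q ^ n + (1 - p₀) * (1 - q) ^ n) ≤ 1 := by
      rw [div_le_one hd]; nlinarith
    have h1 : p₀ * uR * (p₀ * q ^ n / (p₀ * q ^ n + (1 - p₀) * (1 - q) ^ n))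
        ≤ p₀ * uR := mul_le_of_le_one_right (by positivity) hfrac
    have h2 : c / ε ≤ (1 - p₀) * uL := le_trans hcε (min_le_right _ _)
    linarith
  · have hd : (0:ℝ) < p₀ * (1 - q) ^ n + (1 - p₀) * q ^ n := by positivity
    have hfrac : 0 ≤ p₀ * (1 - q) ^ n / (p₀ * (1 - q) ^ n + (1 - p₀) * q ^ n) := by
      positivity
    have h1 : (1 - p₀) * uL *
        (1 - p₀ * (1 - q) ^ n / (p₀ * (1 - q) ^ n + (1 - p₀) * q ^ n))
        ≤ (1 - p₀) * uL := mul_le_of_le_one_right (by positivity) (by linarith)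
    have h2 : c / ε ≤ p₀ * uR := le_trans hcε (min_le_left _ _)
    linarith
end
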